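/- Let ℋ₁ and ℋ₂ be complex inner product spaces (inner products linear in the first argument, conjugate-linear in the second), let f : M → ℋ₁ and g : M → ℋ₂ be functions with ||f(z)||² ≥ ||g(z)||² for every z ∈ M, and define R(z,w) = ⟨f(z), f(w)⟩ − ⟨g(z), g(w)⟩. Then R ∈ 𝒫_2(M) if and only if for all z, w ∈ M: ||f(z)||²·||g(w)||² + ||f(w)||²·||g(z)||² − 2·Re(⟨f(z), f(w)⟩·⟨g(w), g(z)⟩) + |⟨f(z), f(w)⟩|² + |⟨g(z), g(w)⟩|² ≤ ||f(z)||²·||f(w)||² + ||g(z)||²·||g(w)||². (The first three terms on the left equal ||f(z)⊗g(w) − f(w)⊗g(z)||², the squared norm of the wedge (f∧g)(z,w).) -/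

import Mathlib

open scoped ComplexOrder

lemma auxRev (P Q : ℝ) (hP : 0 ≤ P) (hQ : 0 ≤ Q) (c : ℂ) (h : Complex.normSq c ≤ P * Q)
    (a b : ℂ) :
    0 ≤ P * Complex.normSq a + Q * Complex.normSq b + 2 * (c * a * (starRingEnd ℂ) b).re := by
  set t := c * a * (starRingEnd ℂ) b with ht
  have h1 : |t.re| ≤ ‖t‖ := Complex.abs_re_le_norm t
  have h2 : -‖t‖ ≤ t.re := by
    have := neg_abs_le t.re; linarith
  have h3 : ‖t‖ = ‖c‖ * ‖a‖ * ‖b‖ := by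
    rw [ht]; simp [map_mul]
  have hca : ‖c‖ ^ 2 = Complex.normSq c := Complex.sq_norm c
  have haa : ‖a‖ ^ 2 = Complex.normSq a := Complex.sq_norm a
  have hba : ‖b‖ ^ 2 = Complex.normSq b := Complex.sq_norm b
  have hc0 : 0 ≤ ‖c‖ := norm_nonneg c
  have ha0 : 0 ≤ ‖a‖ := norm_nonneg a
  have hb0 : 0 ≤ ‖b‖ := norm_nonneg b
  have key : 2 * (‖c‖ * ‖a‖ * ‖b‖)
      ≤ P * ‖a‖ ^ 2 + Q * ‖b‖ ^ 2 := by
    have hS : 0 ≤ P * ‖a‖ ^ 2 + Q * ‖b‖ ^ 2 := by positivity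
    have hu : 0 ≤ 2 * (‖c‖ * ‖a‖ * ‖b‖) := by positivity
    have hsq : (2 * (‖c‖ * ‖a‖ * ‖b‖)) ^ 2
        ≤ (P * ‖a‖ ^ 2 + Q * ‖b‖ ^ 2) ^ 2 := by
      nlinarith [sq_nonneg (P * ‖a‖ ^ 2 - Q * ‖b‖ ^ 2),
        mul_le_mul_of_nonneg_right h (sq_nonneg (‖a‖ * ‖b‖)), hca]
    exact (pow_le_pow_iff_left₀ hu hS (by norm_num)).mp hsq
  nlinarith [key, h2, h3, hca, haa, hba]

lemma auxFwd (P Q : ℝ) (hP : 0 ≤ P) (hQ : 0 ≤ Q) (c : ℂ)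
    (h : ∀ a b : ℂ, 0 ≤ P * Complex.normSq a + Q * Complex.normSq b
        + 2 * (c * a * (starRingEnd ℂ) b).re) :
    Complex.normSq c ≤ P * Q := by
  have hq : ∀ s : ℝ, 0 ≤ Q * (s * s) + (2 * Complex.normSq c) * s + P * Complex.normSq c := by
    intro s
    have := h ((starRingEnd ℂ) c) (s : ℝ)
    simp only [Complex.normSq_conj, Complex.normSq_ofReal] at this
    have he : (c * (starRingEnd ℂ) c * (starRingEnd ℂ) (s:ℂ)).re = Complex.normSq c * s := by
      rw [Complex.mul_conj]
      simp [Complex.ofReal_mul]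
    rw [he] at this
    nlinarith [this]
  have hd := discrim_le_zero hq
  rw [discrim] at hd
  rcases (Complex.normSq_nonneg c).eq_or_lt with h0 | h0
  · rw [← h0]; exact mul_nonneg hP hQ
  · nlinarith [hd, h0]

/-- `R ∈ 𝒫_N(M)`: for all points `z_1, …, z_N ∈ M` and scalars `a_1, …, a_N ∈ ℂ`,
the sum `Σ_{i,j} R(z_i, z_j) a_i conj(a_j)` is a nonnegative real number. -/
def InP {M : Type*} (N : ℕ) (R : M × M → ℂ) : Prop :=
  ∀ (z : Fin N → M) (a : Fin N → ℂ),
    0 ≤ ∑ i, ∑ j, R (z i, z j) * a i * (starRingEnd ℂ) (a j)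

/-- Lemma 6: with `R(z,w) = ⟨f(z), f(w)⟩ − ⟨g(z), g(w)⟩` (paper convention: linear in
the first slot and conjugate-linear in the second, i.e. Mathlib's `inner ℂ (f w) (f z)`)
and `‖f‖² ≥ ‖g‖²` on the diagonal, `R ∈ 𝒫_2(M)` iff for all `z, w`:
`‖(f∧g)(z,w)‖² + |⟨f(z),f(w)⟩|² + |⟨g(z),g(w)⟩|² ≤ ‖f(z)‖²‖f(w)‖² + ‖g(z)‖²‖g(w)‖²`,
where `‖(f∧g)(z,w)‖² = ‖f(z)‖²‖g(w)‖² + ‖f(w)‖²‖g(z)‖² − 2 Re(⟨f(z),f(w)⟩⟨g(w),g(z)⟩)`. -/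
theorem stmt13 {M : Type*} {H₁ H₂ : Type*}
    [NormedAddCommGroup H₁] [InnerProductSpace ℂ H₁]
    [NormedAddCommGroup H₂] [InnerProductSpace ℂ H₂]
    (f : M → H₁) (g : M → H₂)
    (hdiag : ∀ z : M, ‖g z‖ ^ 2 ≤ ‖f z‖ ^ 2)
    (R : M × M → ℂ)
    (hR : ∀ z w : M, R (z, w) =
      (inner ℂ (f w) (f z) : ℂ) - (inner ℂ (g w) (g z) : ℂ)) :
    InP 2 R ↔
      ∀ z w : M,
        ‖f z‖ ^ 2 * ‖g w‖ ^ 2 + ‖f w‖ ^ 2 * ‖g z‖ ^ 2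
            - 2 * ((inner ℂ (f w) (f z) : ℂ) * (inner ℂ (g z) (g w) : ℂ)).re
          + Complex.normSq (inner ℂ (f w) (f z) : ℂ)
          + Complex.normSq (inner ℂ (g w) (g z) : ℂ)
        ≤ ‖f z‖ ^ 2 * ‖f w‖ ^ 2 + ‖g z‖ ^ 2 * ‖g w‖ ^ 2 := by
  unfold InP
  have hsymm : ∀ z w : M, R (w, z) = (starRingEnd ℂ) (R (z, w)) := by
    intro z w
    rw [hR, hR, map_sub, inner_conj_symm, inner_conj_symm]
  have hdiagR : ∀ z : M, R (z, z) = ((‖f z‖ ^ 2 - ‖g z‖ ^ 2 : ℝ) : ℂ) := by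
    intro z
    rw [hR, inner_self_eq_norm_sq_to_K, inner_self_eq_norm_sq_to_K]
    push_cast
    norm_num
  have hAB : ∀ z w : M, Complex.normSq (R (z, w))
      = Complex.normSq (inner ℂ (f w) (f z) : ℂ) + Complex.normSq (inner ℂ (g w) (g z) : ℂ)
        - 2 * ((inner ℂ (f w) (f z) : ℂ) * (inner ℂ (g z) (g w) : ℂ)).re := by
    intro z w
    rw [hR, Complex.normSq_sub, ← inner_conj_symm (g z) (g w)]
  have hsum : ∀ (z : Fin 2 → M) (a : Fin 2 → ℂ),
      ∑ i, ∑ j, R (z i, z j) * a i * (starRingEnd ℂ) (a j)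
      = (((‖f (z 0)‖ ^ 2 - ‖g (z 0)‖ ^ 2) * Complex.normSq (a 0)
          + (‖f (z 1)‖ ^ 2 - ‖g (z 1)‖ ^ 2) * Complex.normSq (a 1)
          + 2 * (R (z 0, z 1) * a 0 * (starRingEnd ℂ) (a 1)).re : ℝ) : ℂ) := by
    intro z a
    rw [Fin.sum_univ_two, Fin.sum_univ_two, Fin.sum_univ_two,
      hsymm (z 0) (z 1), hdiagR (z 0), hdiagR (z 1)]
    apply Complex.ext <;>
      simp [Complex.normSq_apply, Complex.mul_re, Complex.mul_im] <;> ring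
  constructor
  · intro hIP z w
    have habq : ∀ a b : ℂ, 0 ≤ (‖f z‖ ^ 2 - ‖g z‖ ^ 2) * Complex.normSq a
        + (‖f w‖ ^ 2 - ‖g w‖ ^ 2) * Complex.normSq b
        + 2 * (R (z, w) * a * (starRingEnd ℂ) b).re := by
      intro a b
      have h2 := hIP ![z, w] ![a, b]
      rw [hsum ![z, w] ![a, b]] at h2
      rw [Complex.zero_le_real] at h2
      simpa using h2
    have hns := auxFwd _ _ (by linarith [hdiag z]) (by linarith [hdiag w]) _ habq
    rw [hAB z w] at hns
    nlinarith [hns]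
  · intro h z a
    rw [hsum z a, Complex.zero_le_real]
    have hns : Complex.normSq (R (z 0, z 1))
        ≤ (‖f (z 0)‖ ^ 2 - ‖g (z 0)‖ ^ 2) * (‖f (z 1)‖ ^ 2 - ‖g (z 1)‖ ^ 2) := by
      rw [hAB]
      nlinarith [h (z 0) (z 1)]
    exact auxRev _ _ (by linarith [hdiag (z 0)]) (by linarith [hdiag (z 1)]) _ hns _ _
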